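/- arXiv:2109.02845 — 3 statements merged into one kernel-verified Lean document; each statement's English description precedes it below -/
import Mathlib

section
/- For every α∈(0,1), τ>0 and ζ∈ℂ with 0<|ζ|<1, the series Σ_{j=0}^∞ d_j^{(α)} ζ^j converges absolutely and Σ_{j=0}^∞ d_j^{(α)} ζ^j = (τ^{−α}/Γ(2−α)) · ((1−ζ)²/ζ) · Σ_{j=1}^∞ j^{1−α} ζ^j, where the last series is the polylogarithm Li_{α−1}(ζ) = Σ_{j=1}^∞ ζ^j/j^{α−1}. -/
set_option maxHeartbeats 1000000 in
/-- Generating function of the L1 weights: for `α ∈ (0,1)`, `τ > 0` and `0 < |ζ| < 1`,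
the series `∑ d_j^{(α)} ζ^j` converges absolutely and equals
`(τ^{-α}/Γ(2-α)) ((1-ζ)²/ζ) Li_{α-1}(ζ)`, where
`Li_{α-1}(ζ) = ∑_{j≥1} j^{1-α} ζ^j` (the `j = 0` term below vanishes since `0^{1-α} = 0`). -/
theorem L1_weights_generating_function
    (α τ : ℝ) (hα : α ∈ Set.Ioo (0:ℝ) 1) (hτ : 0 < τ)
    (b d : ℕ → ℝ)
    (hb : ∀ j : ℕ, b j = (((j : ℝ) + 1) ^ (1 - α) - (j : ℝ) ^ (1 - α)) / Real.Gamma (2 - α))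
    (hd0 : d 0 = τ ^ (-α) * b 0)
    (hd : ∀ j : ℕ, 1 ≤ j → d j = τ ^ (-α) * (b j - b (j - 1)))
    (ζ : ℂ) (hζ0 : 0 < ‖ζ‖) (hζ1 : ‖ζ‖ < 1) :
    Summable (fun j : ℕ => ‖(d j : ℂ) * ζ ^ j‖) ∧
    ∑' j : ℕ, (d j : ℂ) * ζ ^ j =
      ((τ ^ (-α) / Real.Gamma (2 - α) : ℝ) : ℂ) * ((1 - ζ) ^ 2 / ζ) *
        ∑' j : ℕ, (((j : ℝ) ^ (1 - α) : ℝ) : ℂ) * ζ ^ j := by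
  obtain ⟨hα0, hα1⟩ := hα
  have hζne : ζ ≠ 0 := by
    intro h; simp [h] at hζ0
  set c : ℂ := ((τ ^ (-α) / Real.Gamma (2 - α) : ℝ) : ℂ) with hc
  set A : ℕ → ℂ := fun j => (((j : ℝ) ^ (1 - α) : ℝ) : ℂ) with hA
  have h1α : (0:ℝ) < 1 - α := by linarith
  have hA0 : A 0 = 0 := by
    simp [hA, Real.zero_rpow (ne_of_gt h1α)]
  -- summability of A j * ζ^j
  have hS : Summable (fun j : ℕ => A j * ζ ^ j) := by
    have h1 : Summable (fun j : ℕ => (j : ℝ) * ‖ζ‖ ^ j) := by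
      simpa using summable_pow_mul_geometric_of_norm_lt_one 1
        (by simpa using hζ1 : ‖‖ζ‖‖ < 1)
    apply Summable.of_norm
    apply Summable.of_nonneg_of_le (fun j => norm_nonneg _) _ h1
    intro j
    have hnorm : ‖A j * ζ ^ j‖ = (j:ℝ)^(1-α) * ‖ζ‖ ^ j := by
      simp [hA, norm_mul, Complex.norm_real, abs_of_nonneg (Real.rpow_nonneg (Nat.cast_nonneg j) _),
        norm_pow]
    rw [hnorm]
    rcases Nat.eq_zero_or_pos j with h | h
    · simp [h, Real.zero_rpow (ne_of_gt h1α)]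
    · have : (j:ℝ)^(1-α) ≤ (j:ℝ)^(1:ℝ) :=
        Real.rpow_le_rpow_of_exponent_le (by exact_mod_cast h) (by linarith)
      apply mul_le_mul_of_nonneg_right _ (pow_nonneg (norm_nonneg _) _)
      simpa using this
  have hS1 : Summable (fun j : ℕ => A (j + 1) * ζ ^ (j + 1)) :=
    (summable_nat_add_iff 1).2 hS
  have hS1' : Summable (fun j : ℕ => A (j + 1) * ζ ^ j) := by
    have := hS1.mul_left ζ⁻¹
    refine this.congr fun j => ?_
    field_simp [pow_succ]
    ring
  -- the function g
  set g : ℕ → ℂ := fun j => c * (A (j + 1) - A j) * ζ ^ j with hg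
  have hgsum : Summable g := by
    have : Summable (fun j => c * (A (j+1) * ζ ^ j) - c * (A j * ζ ^ j)) :=
      (hS1'.mul_left c).sub (hS.mul_left c)
    refine this.congr fun j => ?_
    simp [hg]; ring
  -- the shifted function k
  set k : ℕ → ℂ := fun j => Nat.rec 0 (fun n _ => ζ * g n) j with hk
  have hk0 : k 0 = 0 := rfl
  have hksucc : ∀ n, k (n + 1) = ζ * g n := fun n => rfl
  have hksum : Summable k := by
    rw [← summable_nat_add_iff 1]
    simpa [hksucc] using hgsum.mul_left ζ
  -- per-term identity
  have hterm : ∀ j : ℕ, (d j : ℂ) * ζ ^ j = g j - k j := by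
    intro j
    cases j with
    | zero =>
      have : (d 0 : ℝ) = τ ^ (-α) / Real.Gamma (2 - α) *
          (((1:ℝ)) ^ (1 - α) - ((0:ℝ)) ^ (1 - α)) := by
        rw [hd0, hb 0]; push_cast; ring
      simp only [hk0, hg, pow_zero, mul_one, sub_zero]
      rw [this]
      push_cast [hA, hc]
      ring
    | succ n =>
      have hdn : (d (n+1) : ℝ) = τ ^ (-α) / Real.Gamma (2 - α) *
          ((((n:ℝ)+2) ^ (1 - α) - ((n:ℝ)+1) ^ (1 - α)) -
           (((n:ℝ)+1) ^ (1 - α) - (n:ℝ) ^ (1 - α))) := by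
        rw [hd (n+1) (Nat.le_add_left 1 n)]
        simp only [Nat.add_sub_cancel]
        rw [hb (n+1), hb n]
        push_cast
        ring
      rw [hksucc]
      simp only [hg, hA]
      rw [hdn]
      push_cast [hc]
      ring
  have hdsum : Summable (fun j : ℕ => (d j : ℂ) * ζ ^ j) := by
    refine (hgsum.sub hksum).congr fun j => (hterm j).symm
  constructor
  · exact (summable_norm_iff.2 hdsum)
  -- tsum computations
  have hSshift : ∑' j : ℕ, A (j + 1) * ζ ^ (j + 1) = ∑' j : ℕ, A j * ζ ^ j := by
    rw [Summable.tsum_eq_zero_add hS, hA0]; simp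
  have hSg : ∑' j, g j = c * (ζ⁻¹ - 1) * ∑' j : ℕ, A j * ζ ^ j := by
    have e1 : ∑' j : ℕ, A (j + 1) * ζ ^ j = ζ⁻¹ * ∑' j : ℕ, A j * ζ ^ j := by
      rw [← hSshift, ← tsum_mul_left]
      congr 1; funext j
      field_simp [pow_succ]; ring
    calc ∑' j, g j = ∑' j, (c * (A (j+1) * ζ ^ j) - c * (A j * ζ ^ j)) := by
          congr 1; funext j; simp [hg]; ring
      _ = c * ∑' j : ℕ, A (j+1) * ζ ^ j - c * ∑' j : ℕ, A j * ζ ^ j := by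
          rw [Summable.tsum_sub (hS1'.mul_left c) (hS.mul_left c), tsum_mul_left, tsum_mul_left]
      _ = c * (ζ⁻¹ - 1) * ∑' j : ℕ, A j * ζ ^ j := by rw [e1]; ring
  have hSk : ∑' j, k j = ζ * ∑' j, g j := by
    rw [Summable.tsum_eq_zero_add hksum, hk0]
    simp only [hksucc, zero_add]
    rw [tsum_mul_left]
  calc ∑' j : ℕ, (d j : ℂ) * ζ ^ j = ∑' j, (g j - k j) := by
        congr 1; funext j; exact hterm j
    _ = ∑' j, g j - ∑' j, k j := Summable.tsum_sub hgsum hksum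
    _ = (1 - ζ) * ∑' j, g j := by rw [hSk]; ring
    _ = (1 - ζ) * (c * (ζ⁻¹ - 1) * ∑' j : ℕ, A j * ζ ^ j) := by rw [hSg]
    _ = c * ((1 - ζ) ^ 2 / ζ) * ∑' j : ℕ, A j * ζ ^ j := by
        field_simp
end

section
/- Let θ∈(π/2,π), κ>0, T>0 and β>0. There exists a constant C>0 such that for all t∈(0,T]: 2∫_κ^∞ e^{rt cos θ} r^{β−1} dr + κ^β ∫_{−θ}^{θ} e^{κt cos ψ} dψ ≤ C t^{−β}. -/
open MeasureTheory

/-- Kernel bound for the contour `Γ_{θ,κ}`: for `θ ∈ (π/2, π)`, `κ > 0`, `T > 0`, `β > 0`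
there is `C > 0` with
`2∫_κ^∞ e^{rt cos θ} r^{β-1} dr + κ^β ∫_{-θ}^{θ} e^{κt cos ψ} dψ ≤ C t^{-β}`
for all `t ∈ (0,T]`; the left-hand side is `∫_{Γ_{θ,κ}} |e^{zt}||z|^{β-1}|dz|`. -/
theorem contour_kernel_bound
    (θ κ T β : ℝ) (hθ : θ ∈ Set.Ioo (Real.pi / 2) Real.pi)
    (hκ : 0 < κ) (hT : 0 < T) (hβ : 0 < β) :
    ∃ C : ℝ, 0 < C ∧
      ∀ t ∈ Set.Ioc (0:ℝ) T,
        2 * (∫ r in Set.Ioi κ, Real.exp (r * t * Real.cos θ) * r ^ (β - 1)) +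
          κ ^ β * (∫ ψ in (-θ)..θ, Real.exp (κ * t * Real.cos ψ)) ≤ C * t ^ (-β) := by
  obtain ⟨hθ1, hθ2⟩ := hθ
  have hπ := Real.pi_pos
  have hθ0 : 0 < θ := by linarith
  have hc : Real.cos θ < 0 :=
    Real.cos_neg_of_pi_div_two_lt_of_lt hθ1 (by linarith)
  set c : ℝ := -Real.cos θ with hcdef
  have hc0 : 0 < c := by simp only [hcdef]; linarith
  refine ⟨2 * Real.Gamma β * c ^ (-β) + κ ^ β * (2 * θ * Real.exp (κ * T)) * T ^ β,
    by positivity, ?_⟩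
  rintro t ⟨ht0, htT⟩
  have ha : 0 < t * c := by positivity
  have hΓ := Real.Gamma_pos_of_pos hβ
  -- First integral bound
  have h1 : (∫ r in Set.Ioi κ, Real.exp (r * t * Real.cos θ) * r ^ (β - 1))
      ≤ Real.Gamma β * (t * c) ^ (-β) := by
    have hint : IntegrableOn (fun x : ℝ => x ^ (β - 1) * Real.exp (-(t * c) * x ^ (1:ℝ)))
        (Set.Ioi 0) :=
      integrableOn_rpow_mul_exp_neg_mul_rpow (by linarith) one_pos ha
    have hmono : (∫ r in Set.Ioi κ, Real.exp (r * t * Real.cos θ) * r ^ (β - 1))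
        = ∫ r in Set.Ioi κ, r ^ (β - 1) * Real.exp (-(t * c) * r ^ (1:ℝ)) := by
      refine setIntegral_congr_fun measurableSet_Ioi (fun r hr => ?_)
      rw [Real.rpow_one]
      have : r * t * Real.cos θ = -(t * c) * r := by simp only [hcdef]; ring
      rw [this, mul_comm]
    rw [hmono]
    have hsub : (∫ r in Set.Ioi κ, r ^ (β - 1) * Real.exp (-(t * c) * r ^ (1:ℝ)))
        ≤ ∫ r in Set.Ioi (0:ℝ), r ^ (β - 1) * Real.exp (-(t * c) * r ^ (1:ℝ)) := by
      refine setIntegral_mono_set hint ?_ ?_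
      · filter_upwards [self_mem_ae_restrict (measurableSet_Ioi : MeasurableSet (Set.Ioi (0:ℝ)))]
          with r hr
        have : (0:ℝ) < r := hr
        positivity
      · exact HasSubset.Subset.eventuallyLE (Set.Ioi_subset_Ioi hκ.le)
    refine hsub.trans_eq ?_
    rw [integral_rpow_mul_exp_neg_mul_rpow one_pos (by linarith) ha]
    rw [show (-(β - 1 + 1) / 1 : ℝ) = -β by ring]
    ring
  -- Second integral bound
  have h2 : (∫ ψ in (-θ)..θ, Real.exp (κ * t * Real.cos ψ)) ≤ 2 * θ * Real.exp (κ * T) := by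
    have hle : ∀ ψ ∈ Set.Icc (-θ) θ, Real.exp (κ * t * Real.cos ψ) ≤ Real.exp (κ * T) := by
      intro ψ _
      refine Real.exp_le_exp.mpr ?_
      have h1 : κ * t * Real.cos ψ ≤ κ * t * 1 :=
        mul_le_mul_of_nonneg_left (Real.cos_le_one ψ) (by positivity)
      nlinarith
    have := intervalIntegral.integral_mono_on (a := -θ) (b := θ) (by linarith)
      (Continuous.intervalIntegrable (by continuity) _ _)
      (intervalIntegrable_const (μ := volume)) hle
    rw [intervalIntegral.integral_const] at this
    calc (∫ ψ in (-θ)..θ, Real.exp (κ * t * Real.cos ψ))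
        ≤ (θ - -θ) • Real.exp (κ * T) := this
      _ = 2 * θ * Real.exp (κ * T) := by rw [smul_eq_mul]; ring
  -- combine
  have htβ : (0:ℝ) < t ^ (-β) := Real.rpow_pos_of_pos ht0 _
  have hmul : (t * c) ^ (-β) = t ^ (-β) * c ^ (-β) :=
    Real.mul_rpow ht0.le hc0.le
  have hone : 1 ≤ T ^ β * t ^ (-β) := by
    have h1 : t ^ β ≤ T ^ β := Real.rpow_le_rpow ht0.le htT hβ.le
    have h2 : t ^ (-β) = (t ^ β)⁻¹ := by rw [Real.rpow_neg ht0.le]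
    rw [h2, ← div_eq_mul_inv, le_div_iff₀ (Real.rpow_pos_of_pos ht0 β)]
    linarith
  have hκβ : (0:ℝ) < κ ^ β := Real.rpow_pos_of_pos hκ _
  have hI2 : κ ^ β * (∫ ψ in (-θ)..θ, Real.exp (κ * t * Real.cos ψ))
      ≤ κ ^ β * (2 * θ * Real.exp (κ * T)) * T ^ β * t ^ (-β) := by
    have e1 : κ ^ β * (∫ ψ in (-θ)..θ, Real.exp (κ * t * Real.cos ψ))
        ≤ κ ^ β * (2 * θ * Real.exp (κ * T)) :=
      mul_le_mul_of_nonneg_left h2 hκβ.le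
    have e2 : κ ^ β * (2 * θ * Real.exp (κ * T))
        ≤ κ ^ β * (2 * θ * Real.exp (κ * T)) * (T ^ β * t ^ (-β)) := by
      nlinarith [mul_pos hκβ (mul_pos (mul_pos two_pos hθ0) (Real.exp_pos (κ * T)))]
    calc κ ^ β * (∫ ψ in (-θ)..θ, Real.exp (κ * t * Real.cos ψ))
        ≤ κ ^ β * (2 * θ * Real.exp (κ * T)) := e1
      _ ≤ κ ^ β * (2 * θ * Real.exp (κ * T)) * (T ^ β * t ^ (-β)) := e2
      _ = κ ^ β * (2 * θ * Real.exp (κ * T)) * T ^ β * t ^ (-β) := by ring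
  have hI1 : 2 * (∫ r in Set.Ioi κ, Real.exp (r * t * Real.cos θ) * r ^ (β - 1))
      ≤ 2 * Real.Gamma β * c ^ (-β) * t ^ (-β) := by
    have := mul_le_mul_of_nonneg_left h1 (by norm_num : (0:ℝ) ≤ 2)
    calc 2 * (∫ r in Set.Ioi κ, Real.exp (r * t * Real.cos θ) * r ^ (β - 1))
        ≤ 2 * (Real.Gamma β * (t * c) ^ (-β)) := this
      _ = 2 * Real.Gamma β * c ^ (-β) * t ^ (-β) := by rw [hmul]; ring
  calc 2 * (∫ r in Set.Ioi κ, Real.exp (r * t * Real.cos θ) * r ^ (β - 1)) +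
          κ ^ β * (∫ ψ in (-θ)..θ, Real.exp (κ * t * Real.cos ψ))
      ≤ 2 * Real.Gamma β * c ^ (-β) * t ^ (-β) +
          κ ^ β * (2 * θ * Real.exp (κ * T)) * T ^ β * t ^ (-β) := add_le_add hI1 hI2
    _ = (2 * Real.Gamma β * c ^ (-β) + κ ^ β * (2 * θ * Real.exp (κ * T)) * T ^ β) * t ^ (-β) := by
        ring
end

section
/- Let α∈(0,1), θ∈(π/2,π) with αθ<π, κ>0, T>0 and σ∈[0,1]. There exists a constant C>0 such that for every t∈(0,T] and every λ≥0: λ^σ · |(1/(2πi)) ∫_{Γ_{θ,κ}} e^{zt} z^{α−1} (z^α+λ)^{−1} dz| ≤ C t^{−σα}. -/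
open MeasureTheory

/-- The integral `∫_{Γ_{θ,κ}} F(z) dz` over the contour
`Γ_{θ,κ} = {z : |z| = κ, |Arg z| ≤ θ} ∪ {z = re^{±iθ} : r ≥ κ}`, oriented with
increasing imaginary part: the sum of the two ray integrals (the lower ray traversed
inward, the upper ray outward) and the arc integral. -/
noncomputable def contourIntegral (θ κ : ℝ) (F : ℂ → ℂ) : ℂ :=
  (∫ r in Set.Ioi κ, F ((r : ℂ) * Complex.exp ((θ : ℂ) * Complex.I)) *
      Complex.exp ((θ : ℂ) * Complex.I)) -
  (∫ r in Set.Ioi κ, F ((r : ℂ) * Complex.exp (-(θ : ℂ) * Complex.I)) *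
      Complex.exp (-(θ : ℂ) * Complex.I)) +
  ∫ ψ in (-θ)..θ, F ((κ : ℂ) * Complex.exp ((ψ : ℂ) * Complex.I)) *
      (Complex.I * (κ : ℂ) * Complex.exp ((ψ : ℂ) * Complex.I))

open Real Set Filter Complex

namespace SSOS

namespace Complex

noncomputable def abs : AbsoluteValue ℂ ℝ where
  toFun z := ‖z‖
  map_mul' := norm_mul
  nonneg' := norm_nonneg
  eq_zero' _ := norm_eq_zero
  add_le' := norm_add_le

lemma norm_eq_abs (z : ℂ) : ‖z‖ = Complex.abs z := rfl

lemma abs_apply (z : ℂ) : Complex.abs z = Real.sqrt (_root_.Complex.normSq z) :=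
  _root_.Complex.norm_def z

lemma abs_exp (z : ℂ) : Complex.abs (_root_.Complex.exp z) = Real.exp z.re :=
  _root_.Complex.norm_exp z

@[simp] lemma abs_ofReal (r : ℝ) : Complex.abs (r : ℂ) = |r| :=
  _root_.Complex.norm_real r

@[simp] lemma abs_I : Complex.abs _root_.Complex.I = 1 := _root_.Complex.norm_I

@[simp] lemma abs_two : Complex.abs (2 : ℂ) = 2 := by
  show ‖(2:ℂ)‖ = 2
  simp

@[simp] lemma abs_exp_ofReal_mul_I (x : ℝ) :
    Complex.abs (_root_.Complex.exp ((x : ℂ) * _root_.Complex.I)) = 1 :=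
  _root_.Complex.norm_exp_ofReal_mul_I x

lemma sq_abs (z : ℂ) : Complex.abs z ^ 2 = _root_.Complex.normSq z :=
  _root_.Complex.sq_norm z

lemma abs_re_le_abs (z : ℂ) : |z.re| ≤ Complex.abs z := _root_.Complex.abs_re_le_norm z

end Complex

lemma exp_integral_bound (b κ : ℝ) (hb : 0 < b) (hκ : 0 ≤ κ) :
    ∫ r in Ioi κ, Real.exp (-b * r) ≤ b⁻¹ := by
  have h := integral_comp_mul_left_Ioi (fun u => Real.exp (-u)) κ hb
  simp only [← neg_mul] at h
  rw [h, integral_exp_neg_Ioi, smul_eq_mul]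
  have h1 : Real.exp (-(b*κ)) ≤ 1 := Real.exp_le_one_iff.2 (neg_nonpos.2 (by positivity))
  calc b⁻¹ * Real.exp (-(b*κ)) ≤ b⁻¹ * 1 := by gcongr
    _ = b⁻¹ := mul_one _

lemma gamma_tail_bound (a b κ : ℝ) (ha : 0 < a) (hb : 0 < b) (hκ : 0 < κ) :
    ∫ r in Ioi κ, Real.exp (-b * r) * r ^ (a-1) ≤ Real.Gamma a * b ^ (-a) := by
  have h := integral_comp_mul_left_Ioi
    (fun u => Real.exp (-u) * (u / b) ^ (a-1)) κ hb
  simp only [mul_div_assoc] at h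
  have hrw : (∫ r in Ioi κ, Real.exp (-b * r) * r ^ (a-1))
      = b⁻¹ * ∫ u in Ioi (b*κ), Real.exp (-u) * (u / b) ^ (a-1) := by
    rw [← smul_eq_mul, ← h]
    apply setIntegral_congr_fun measurableSet_Ioi
    intro r hr
    simp only [neg_mul]
    congr 2
    field_simp
  rw [hrw]
  have hrw2 : (∫ u in Ioi (b*κ), Real.exp (-u) * (u / b) ^ (a-1))
      = (∫ u in Ioi (b*κ), Real.exp (-u) * u ^ (a-1)) * (b ^ (a-1))⁻¹ := by
    rw [← integral_mul_const]
    apply setIntegral_congr_fun measurableSet_Ioi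
    intro u hu
    have hu0 : 0 < u := lt_trans (by positivity) hu
    dsimp only
    rw [Real.div_rpow hu0.le hb.le, div_eq_mul_inv]
    ring
  rw [hrw2]
  have hmono : (∫ u in Ioi (b*κ), Real.exp (-u) * u ^ (a-1))
      ≤ ∫ u in Ioi 0, Real.exp (-u) * u ^ (a-1) := by
    apply setIntegral_mono_set (Real.GammaIntegral_convergent ha)
    · filter_upwards [ae_restrict_mem measurableSet_Ioi] with u hu
      have hu0 : (0:ℝ) < u := hu
      positivity
    · exact (Ioi_subset_Ioi (by positivity : (0:ℝ) ≤ b*κ)).eventuallyLE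
  rw [← Real.Gamma_eq_integral ha] at hmono
  have hpos : (0:ℝ) < b ^ (a-1) := Real.rpow_pos_of_pos hb _
  have hG : 0 < Real.Gamma a := Real.Gamma_pos_of_pos ha
  have hI : 0 ≤ ∫ u in Ioi (b*κ), Real.exp (-u) * u ^ (a-1) := by
    apply setIntegral_nonneg measurableSet_Ioi
    intro u hu; have : (0:ℝ) < u := lt_trans (by positivity) hu; positivity
  calc b⁻¹ * ((∫ u in Ioi (b*κ), Real.exp (-u) * u ^ (a-1)) * (b ^ (a-1))⁻¹)
      ≤ b⁻¹ * (Real.Gamma a * (b ^ (a-1))⁻¹) := by gcongr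
    _ = Real.Gamma a * b ^ (-a) := by
        have hsplit : (-a) = (-1) + (-(a-1)) := by ring
        rw [hsplit, Real.rpow_add hb, Real.rpow_neg_one, Real.rpow_neg hb.le]
        ring


lemma resolvent_deriv (α lam : ℝ) (hα : 0 < α) (hlam : 0 < lam) {x : ℝ} (hx : 0 < x) :
    HasDerivAt (fun r : ℝ => -(lam/α) * (r ^ α + lam)⁻¹)
      (lam * x ^ (α-1) / (x ^ α + lam)^2) x := by
  have h1 : HasDerivAt (fun r : ℝ => r ^ α + lam) (α * x ^ (α-1)) x := by
    simpa using (Real.hasDerivAt_rpow_const (x := x) (p := α) (Or.inl hx.ne')).add_const lam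
  have hne : x ^ α + lam ≠ 0 := by positivity
  have h2 := (h1.inv hne).const_mul (-(lam/α))
  refine h2.congr_deriv ?_
  field_simp

lemma resolvent_integral (α lam κ : ℝ) (hα : 0 < α) (hκ : 0 < κ) (hlam : 0 ≤ lam) :
    IntegrableOn (fun r => lam * r ^ (α-1) / (r ^ α + lam)^2) (Ioi κ) volume ∧
    (∫ r in Ioi κ, lam * r ^ (α-1) / (r ^ α + lam)^2) ≤ 1/α := by
  rcases eq_or_lt_of_le hlam with h0 | hlam
  · simp only [← h0, zero_mul, zero_div]
    exact ⟨integrableOn_zero, by simp; positivity⟩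
  · have hderiv : ∀ x ∈ Ici κ, HasDerivAt (fun r : ℝ => -(lam/α) * (r ^ α + lam)⁻¹)
        (lam * x ^ (α-1) / (x ^ α + lam)^2) x :=
      fun x hx => resolvent_deriv α lam hα hlam (lt_of_lt_of_le hκ hx)
    have hpos : ∀ x ∈ Ioi κ, 0 ≤ lam * x ^ (α-1) / (x ^ α + lam)^2 := by
      intro x hx
      have : 0 < x := lt_trans hκ hx
      positivity
    have htend : Tendsto (fun r : ℝ => -(lam/α) * (r ^ α + lam)⁻¹) atTop (nhds 0) := by
      have h1 : Tendsto (fun r : ℝ => r ^ α + lam) atTop atTop :=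
        (tendsto_rpow_atTop hα).atTop_add tendsto_const_nhds
      have := h1.inv_tendsto_atTop
      simpa using this.const_mul (-(lam/α))
    refine ⟨integrableOn_Ioi_deriv_of_nonneg' hderiv hpos htend, ?_⟩
    rw [integral_Ioi_of_hasDerivAt_of_nonneg' hderiv hpos htend]
    have hd : 0 < κ ^ α + lam := by positivity
    rw [zero_sub]
    have : lam / (κ ^ α + lam) ≤ 1 := by
      rw [div_le_one hd]; nlinarith [Real.rpow_pos_of_pos hκ α]
    calc -(-(lam/α) * (κ ^ α + lam)⁻¹) = (lam / (κ ^ α + lam)) * α⁻¹ := by ring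
      _ ≤ 1 * α⁻¹ := by
          exact mul_le_mul_of_nonneg_right this (inv_nonneg.2 hα.le)
      _ = 1/α := by rw [one_mul, one_div]



lemma cpow_polar (r ψ β : ℝ) (hr : 0 < r) (h1 : -Real.pi < ψ) (h2 : ψ ≤ Real.pi) :
    ((r:ℂ) * Complex.exp ((ψ:ℂ) * Complex.I)) ^ (β:ℂ)
      = ((r ^ β : ℝ) : ℂ) * Complex.exp ((↑(β * ψ) : ℂ) * Complex.I) := by
  have hz : (r:ℂ) * Complex.exp ((ψ:ℂ) * Complex.I)
      = Complex.exp ((Real.log r : ℂ) + (ψ:ℂ) * Complex.I) := by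
    rw [Complex.exp_add, ← Complex.ofReal_exp, Real.exp_log hr]
  rw [hz, Complex.cpow_def_of_ne_zero (Complex.exp_ne_zero _),
    Complex.log_exp (by simpa) (by simpa)]
  rw [Real.rpow_def_of_pos hr, Complex.ofReal_exp, ← Complex.exp_add]
  congr 1
  push_cast
  ring

lemma abs_exp_polar (r ψ t : ℝ) :
    Complex.abs (Complex.exp ((r:ℂ) * Complex.exp ((ψ:ℂ) * Complex.I) * (t:ℂ)))
      = Real.exp (r * t * Real.cos ψ) := by
  rw [Complex.abs_exp]
  congr 1
  simp [Complex.exp_ofReal_mul_I_re, Complex.mul_re]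
  ring

noncomputable def gray (α t lam ψ : ℝ) (r : ℝ) : ℂ :=
  Complex.exp ((r:ℂ) * Complex.exp ((ψ:ℂ) * Complex.I) * (t:ℂ)) *
    (((r ^ (α-1) : ℝ)):ℂ) * Complex.exp ((((α-1)*ψ : ℝ) : ℂ) * Complex.I) *
    ((((r ^ α : ℝ)):ℂ) * Complex.exp (((α*ψ : ℝ) : ℂ) * Complex.I) + (lam:ℂ))⁻¹ *
    Complex.exp ((ψ:ℂ) * Complex.I)

lemma gray_eq (α t lam ψ r : ℝ) (hr : 0 < r) (h1 : -Real.pi < ψ) (h2 : ψ ≤ Real.pi) :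
    Complex.exp ((r:ℂ) * Complex.exp ((ψ:ℂ) * Complex.I) * (t:ℂ)) *
      ((r:ℂ) * Complex.exp ((ψ:ℂ) * Complex.I)) ^ ((α:ℂ) - 1) *
      (((r:ℂ) * Complex.exp ((ψ:ℂ) * Complex.I)) ^ (α:ℂ) + (lam:ℂ))⁻¹ *
      Complex.exp ((ψ:ℂ) * Complex.I)
    = gray α t lam ψ r := by
  have e1 : ((α:ℂ) - 1) = (((α - 1 : ℝ)):ℂ) := by push_cast; ring
  rw [e1, cpow_polar r ψ (α-1) hr h1 h2, cpow_polar r ψ α hr h1 h2]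
  unfold gray
  ring

lemma conj_exp_ofReal_mul_I (x : ℝ) :
    (starRingEnd ℂ) (Complex.exp ((x:ℂ) * Complex.I)) = Complex.exp (((-x : ℝ):ℂ) * Complex.I) := by
  rw [← Complex.exp_conj]
  congr 1
  simp [Complex.conj_I]

lemma gray_neg (α t lam ψ r : ℝ) :
    gray α t lam (-ψ) r = (starRingEnd ℂ) (gray α t lam ψ r) := by
  unfold gray
  rw [map_mul, map_mul, map_mul, map_mul, map_inv₀, map_add, map_mul]
  rw [conj_exp_ofReal_mul_I, conj_exp_ofReal_mul_I, conj_exp_ofReal_mul_I]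
  rw [← Complex.exp_conj]
  have h1 : (starRingEnd ℂ) ((r:ℂ) * Complex.exp ((ψ:ℂ) * Complex.I) * (t:ℂ))
      = (r:ℂ) * Complex.exp (((-ψ : ℝ):ℂ) * Complex.I) * (t:ℂ) := by
    rw [map_mul, map_mul, conj_exp_ofReal_mul_I]
    simp [Complex.conj_ofReal]
  rw [h1]
  rw [Complex.conj_ofReal, Complex.conj_ofReal, Complex.conj_ofReal]
  have h2 : (α-1) * (-ψ) = -((α-1)*ψ) := by ring
  have h3 : α * (-ψ) = -(α*ψ) := by ring
  rw [h2, h3]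


lemma abs_add_lower' (a b φ m : ℝ) (ha : 0 ≤ a) (hb : 0 ≤ b) (hm : m ≤ Real.cos φ)
    (hm1 : -1 ≤ m) :
    Real.sqrt ((1 + m) / 2) * (a + b)
      ≤ Complex.abs ((a:ℂ) * Complex.exp ((φ:ℂ) * Complex.I) + (b:ℂ)) := by
  have habs : Complex.abs ((a:ℂ) * Complex.exp ((φ:ℂ) * Complex.I) + (b:ℂ))
      = Real.sqrt ((a * Real.cos φ + b)^2 + (a * Real.sin φ)^2) := by
    rw [Complex.abs_apply, Complex.normSq_apply]
    congr 1 <;> simp [Complex.exp_ofReal_mul_I_re, Complex.add_re, Complex.add_im,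
      Complex.mul_re, Complex.mul_im] <;> ring_nf
  rw [habs]
  have h0 : (0:ℝ) ≤ (1 + m) / 2 := by linarith
  have h4 : Real.sqrt ((1 + m) / 2) * (a + b) = Real.sqrt (((1 + m) / 2) * (a + b)^2) := by
    rw [Real.sqrt_mul h0, Real.sqrt_sq (by linarith)]
  rw [h4]
  apply Real.sqrt_le_sqrt
  have hsc := Real.sin_sq_add_cos_sq φ
  have hc1 := Real.cos_le_one φ
  have expand : (a * Real.cos φ + b)^2 + (a * Real.sin φ)^2
      = a^2 + b^2 + 2*a*b*Real.cos φ := by linear_combination a^2 * hsc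
  rw [expand]
  nlinarith [mul_nonneg (mul_nonneg ha hb) (sub_nonneg.2 hm),
    mul_nonneg (sq_nonneg (a - b)) (sub_nonneg.2 (hm.trans hc1))]

lemma c0_pos (α θ : ℝ) (h1 : 0 < α*θ) (h2 : α*θ < Real.pi) :
    0 < Real.sqrt ((1 + Real.cos (α*θ))/2) := by
  apply Real.sqrt_pos.2
  have h := Real.strictAntiOn_cos ⟨h1.le, h2.le⟩ ⟨Real.pi_pos.le, le_refl _⟩ h2
  rw [Real.cos_pi] at h
  linarith

lemma denom_lb (α θ ψ lam x : ℝ) (hx : 0 ≤ x) (hlam : 0 ≤ lam) (hψ : |ψ| ≤ θ)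
    (hα : 0 < α) (hαθπ : α*θ ≤ Real.pi) :
    Real.sqrt ((1 + Real.cos (α*θ))/2) * (x + lam)
      ≤ Complex.abs ((x:ℂ) * Complex.exp ((↑(α*ψ) : ℂ) * Complex.I) + (lam:ℂ)) := by
  apply abs_add_lower' x lam (α*ψ) _ hx hlam ?_ (Real.neg_one_le_cos _)
  rw [← Real.cos_abs (α*ψ)]
  apply Real.cos_le_cos_of_nonneg_of_le_pi (abs_nonneg _) hαθπ
  rw [abs_mul, abs_of_pos hα]
  exact mul_le_mul_of_nonneg_left hψ hα.le

lemma gray_abs (α t lam ψ r : ℝ) (hr : 0 ≤ r) :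
    Complex.abs (gray α t lam ψ r)
      = Real.exp (r * t * Real.cos ψ) * r ^ (α-1) *
        (Complex.abs ((((r ^ α : ℝ)):ℂ) * Complex.exp (((α*ψ : ℝ) : ℂ) * Complex.I) + (lam:ℂ)))⁻¹ := by
  unfold gray
  rw [map_mul, map_mul, map_mul, map_mul, map_inv₀, abs_exp_polar]
  simp [Complex.abs_exp, Complex.abs_ofReal, _root_.abs_of_nonneg (Real.rpow_nonneg hr (α-1))]


lemma gray_im_le (α θ t lam r : ℝ) (hα0 : 0 < α) (hθ1 : 0 < θ) (hθ2 : θ < Real.pi)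
    (hcos : Real.cos θ ≤ 0) (hαθ : α*θ < Real.pi) (ht : 0 < t) (hlam : 0 ≤ lam)
    (hr : 0 < r) :
    |(gray α t lam θ r).im| ≤
      t * Real.exp (r * t * Real.cos θ) * (Real.sqrt ((1 + Real.cos (α*θ))/2))⁻¹
      + lam * r ^ (α-1) / ((Real.sqrt ((1 + Real.cos (α*θ))/2))^2 * (r^α + lam)^2) := by
  set c0 := Real.sqrt ((1 + Real.cos (α*θ))/2) with hc0def
  have hc0 : 0 < c0 := c0_pos α θ (mul_pos hα0 hθ1) hαθ
  have hxα : 0 < r ^ α := Real.rpow_pos_of_pos hr α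
  have hx1 : 0 < r ^ (α-1) := Real.rpow_pos_of_pos hr (α-1)
  set D := ((r ^ α : ℝ) : ℂ) * Complex.exp ((↑(α*θ) : ℂ) * Complex.I) + (lam:ℂ) with hDdef
  have hDlb : c0 * (r^α + lam) ≤ Complex.abs D :=
    denom_lb α θ θ lam (r^α) hxα.le hlam (by rw [abs_of_pos hθ1]) hα0 hαθ.le
  have hDpos : 0 < Complex.abs D := lt_of_lt_of_le (by positivity) hDlb
  have hDne : D ≠ 0 := by
    intro h; rw [h] at hDpos; simp at hDpos
  set u := Complex.exp ((r:ℂ) * Complex.exp ((θ:ℂ) * Complex.I) * (t:ℂ)) with hudef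
  set v := Complex.exp ((↑(α*θ) : ℂ) * Complex.I) * D⁻¹ with hvdef
  set w := ((r ^ (α-1) : ℝ) : ℂ) * v with hwdef
  have hfact : gray α t lam θ r = u * w := by
    have hE : Complex.exp ((↑((α-1)*θ) : ℂ) * Complex.I) * Complex.exp ((θ:ℂ) * Complex.I)
        = Complex.exp ((↑(α*θ) : ℂ) * Complex.I) := by
      rw [← Complex.exp_add]; congr 1; push_cast; ring
    unfold gray
    rw [hwdef, hvdef, hudef, hDdef, ← hE]; ring
  -- imaginary part of v
  have hprod : Complex.exp ((↑(α*θ) : ℂ) * Complex.I) * (starRingEnd ℂ) D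
      = ((r^α : ℝ) : ℂ) + (lam:ℂ) * Complex.exp ((↑(α*θ) : ℂ) * Complex.I) := by
    rw [hDdef, map_add, map_mul, conj_exp_ofReal_mul_I, Complex.conj_ofReal,
      Complex.conj_ofReal, mul_add]
    have h5 : Complex.exp ((↑(α*θ) : ℂ) * Complex.I) *
        (((r^α : ℝ) : ℂ) * Complex.exp ((↑(-(α*θ)) : ℂ) * Complex.I))
        = ((r^α : ℝ) : ℂ) * (Complex.exp ((↑(α*θ) : ℂ) * Complex.I) *
            Complex.exp ((↑(-(α*θ)) : ℂ) * Complex.I)) := by ring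
    rw [h5, ← Complex.exp_add]
    have h6 : (↑(α*θ) : ℂ) * Complex.I + (↑(-(α*θ)) : ℂ) * Complex.I = 0 := by
      push_cast; ring
    rw [h6, Complex.exp_zero, mul_one]
    ring
  have hv : v = (((r^α : ℝ) : ℂ) + (lam:ℂ) * Complex.exp ((↑(α*θ) : ℂ) * Complex.I)) *
      (((Complex.normSq D)⁻¹ : ℝ) : ℂ) := by
    rw [hvdef, Complex.inv_def, ← mul_assoc, hprod]
  have hvim : v.im = lam * Real.sin (α*θ) * (Complex.normSq D)⁻¹ := by
    rw [hv]
    simp only [Complex.add_im, Complex.add_re, Complex.mul_im, Complex.mul_re,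
      Complex.ofReal_re, Complex.ofReal_im, Complex.exp_ofReal_mul_I_im,
      Complex.exp_ofReal_mul_I_re]
    ring
  have hnormSq : (c0 * (r^α + lam))^2 ≤ Complex.normSq D := by
    rw [← Complex.sq_abs]
    apply pow_le_pow_left₀ (mul_nonneg hc0.le (by positivity)) hDlb
  have hvim_le : |v.im| ≤ lam * (c0^2 * (r^α + lam)^2)⁻¹ := by
    rw [hvim]
    rw [abs_mul, abs_mul]
    have h7 : |Real.sin (α*θ)| ≤ 1 := Real.abs_sin_le_one _
    have h8 : |(Complex.normSq D)⁻¹| ≤ (c0^2 * (r^α + lam)^2)⁻¹ := by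
      rw [_root_.abs_of_nonneg (inv_nonneg.2 (Complex.normSq_nonneg D))]
      apply inv_anti₀ (mul_pos (pow_pos hc0 2) (pow_pos (by positivity) 2))
      calc c0^2 * (r^α + lam)^2 = (c0 * (r^α + lam))^2 := by ring
        _ ≤ Complex.normSq D := hnormSq
    calc |lam| * |Real.sin (α*θ)| * |(Complex.normSq D)⁻¹|
        ≤ lam * 1 * (c0^2 * (r^α + lam)^2)⁻¹ := by
          rw [_root_.abs_of_nonneg hlam]; gcongr
      _ = lam * (c0^2 * (r^α + lam)^2)⁻¹ := by ring
  have hvabs : Complex.abs v ≤ (c0 * (r^α + lam))⁻¹ := by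
    rw [hvdef, map_mul, map_inv₀, Complex.abs_exp_ofReal_mul_I, one_mul]
    exact inv_anti₀ (by positivity) hDlb
  have hwim_le : |w.im| ≤ r^(α-1) * (lam * (c0^2 * (r^α + lam)^2)⁻¹) := by
    have : w.im = r^(α-1) * v.im := by
      rw [hwdef]; simp [Complex.mul_im]
    rw [this, abs_mul, _root_.abs_of_nonneg hx1.le]
    gcongr
  have hwabs : Complex.abs w ≤ r^(α-1) * (c0 * (r^α + lam))⁻¹ := by
    rw [hwdef, map_mul, Complex.abs_ofReal, _root_.abs_of_nonneg hx1.le]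
    gcongr
  have hu_abs : Complex.abs u = Real.exp (r*t*Real.cos θ) := abs_exp_polar r θ t
  have hXre : ((r:ℂ) * Complex.exp ((θ:ℂ) * Complex.I) * (t:ℂ)).re = r*t*Real.cos θ := by
    simp [Complex.mul_re, Complex.mul_im, Complex.exp_ofReal_mul_I_re,
      Complex.exp_ofReal_mul_I_im]
    ring
  have hXim : ((r:ℂ) * Complex.exp ((θ:ℂ) * Complex.I) * (t:ℂ)).im = r*t*Real.sin θ := by
    simp [Complex.mul_re, Complex.mul_im, Complex.exp_ofReal_mul_I_re,
      Complex.exp_ofReal_mul_I_im]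
    ring
  have hsinθ : 0 ≤ Real.sin θ := Real.sin_nonneg_of_nonneg_of_le_pi hθ1.le hθ2.le
  have hu_im : |u.im| ≤ Real.exp (r*t*Real.cos θ) * (r*t) := by
    rw [hudef, Complex.exp_im, hXre, hXim, abs_mul,
      _root_.abs_of_nonneg (Real.exp_pos _).le]
    gcongr
    calc |Real.sin (r*t*Real.sin θ)| ≤ |r*t*Real.sin θ| := Real.abs_sin_le_abs
      _ = r*t*Real.sin θ := _root_.abs_of_nonneg (by positivity)
      _ ≤ r*t*1 := by gcongr; exact Real.sin_le_one θ
      _ = r*t := mul_one _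
  have him : |(u*w).im| ≤ Complex.abs u * |w.im| + |u.im| * Complex.abs w := by
    rw [Complex.mul_im]
    calc |u.re * w.im + u.im * w.re|
        ≤ |u.re * w.im| + |u.im * w.re| := abs_add_le _ _
      _ = |u.re| * |w.im| + |u.im| * |w.re| := by rw [abs_mul, abs_mul]
      _ ≤ Complex.abs u * |w.im| + |u.im| * Complex.abs w := by
          apply add_le_add
          · exact mul_le_mul_of_nonneg_right (Complex.abs_re_le_abs u) (abs_nonneg _)
          · exact mul_le_mul_of_nonneg_left (Complex.abs_re_le_abs w) (abs_nonneg _)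
  rw [hfact]
  have hrr : r ^ (1:ℝ) * r^(α-1) = r^α := by
    rw [← Real.rpow_add hr]; norm_num
  have hexp1 : Real.exp (r*t*Real.cos θ) ≤ 1 :=
    Real.exp_le_one_iff.2 (mul_nonpos_of_nonneg_of_nonpos (by positivity) hcos)
  have hfrac : r^α * (r^α + lam)⁻¹ ≤ 1 := by
    rw [← div_eq_mul_inv, div_le_one (by positivity)]; linarith
  calc |(u*w).im| ≤ Complex.abs u * |w.im| + |u.im| * Complex.abs w := him
    _ ≤ 1 * (r^(α-1) * (lam * (c0^2 * (r^α + lam)^2)⁻¹))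
        + (Real.exp (r*t*Real.cos θ) * (r*t)) * (r^(α-1) * (c0 * (r^α + lam))⁻¹) := by
        gcongr
        rw [hu_abs]; exact hexp1
    _ ≤ t * Real.exp (r * t * Real.cos θ) * c0⁻¹
        + lam * r ^ (α-1) / (c0^2 * (r^α + lam)^2) := by
        rw [add_comm]
        apply add_le_add
        · have e1 : (Real.exp (r*t*Real.cos θ) * (r*t)) * (r^(α-1) * (c0 * (r^α + lam))⁻¹)
              = (t * Real.exp (r*t*Real.cos θ) * c0⁻¹) * (r^α * (r^α + lam)⁻¹) := by
            rw [mul_inv, ← hrr, Real.rpow_one]; ring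
          rw [e1]
          calc (t * Real.exp (r*t*Real.cos θ) * c0⁻¹) * (r^α * (r^α + lam)⁻¹)
              ≤ (t * Real.exp (r*t*Real.cos θ) * c0⁻¹) * 1 :=
                mul_le_mul_of_nonneg_left hfrac (by positivity)
            _ = t * Real.exp (r*t*Real.cos θ) * c0⁻¹ := mul_one _
        · rw [div_eq_mul_inv]; ring_nf; rfl

lemma rpow_cont (a κ : ℝ) (hκ : 0 < κ) :
    ContinuousOn (fun r : ℝ => r ^ a) (Set.Ioi κ) := by
  intro x hx
  exact (Real.continuousAt_rpow_const x a (Or.inl (ne_of_gt (lt_trans hκ hx)))).continuousWithinAt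

lemma exp_mul_cont (b : ℝ) : Continuous (fun r : ℝ => Real.exp (-b*r)) :=
  Real.continuous_exp.comp (continuous_const.mul continuous_id)

lemma int_exp_rpow (a b κ : ℝ) (ha : a ≤ 1) (hb : 0 < b) (hκ : 0 < κ) :
    IntegrableOn (fun r => Real.exp (-b*r) * r ^ (a-1)) (Set.Ioi κ) := by
  apply Integrable.mono' ((exp_neg_integrableOn_Ioi κ hb).const_mul (κ ^ (a-1)))
  · apply ContinuousOn.aestronglyMeasurable _ measurableSet_Ioi
    exact ((exp_mul_cont b).continuousOn).mul (rpow_cont (a-1) κ hκ)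
  · filter_upwards [ae_restrict_mem measurableSet_Ioi] with r hr
    have hr0 : 0 < r := lt_trans hκ hr
    have h1 : r ^ (a-1) ≤ κ ^ (a-1) :=
      Real.rpow_le_rpow_of_nonpos hκ (le_of_lt hr) (by linarith)
    rw [Real.norm_eq_abs, _root_.abs_of_nonneg (by positivity)]
    calc Real.exp (-b*r) * r ^ (a-1) ≤ Real.exp (-b*r) * κ ^ (a-1) := by
          exact mul_le_mul_of_nonneg_left h1 (Real.exp_pos _).le
      _ = κ ^ (a-1) * Real.exp (-b*r) := mul_comm _ _

lemma gray_abs_le (α θ t lam ψ r : ℝ) (hα0 : 0 < α) (hθ1 : 0 < θ)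
    (hr : 0 < r) (hlam : 0 ≤ lam) (hψ : |ψ| ≤ θ) (hαθ : α*θ < Real.pi) :
    Complex.abs (gray α t lam ψ r)
      ≤ Real.exp (r * t * Real.cos ψ) * r ^ (α-1) *
        (Real.sqrt ((1 + Real.cos (α*θ))/2) * (r^α + lam))⁻¹ := by
  set c0 := Real.sqrt ((1 + Real.cos (α*θ))/2) with hc0def
  have hc0 : 0 < c0 := c0_pos α θ (mul_pos hα0 hθ1) hαθ
  have hxα : 0 < r ^ α := Real.rpow_pos_of_pos hr α
  rw [gray_abs α t lam ψ r hr.le]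
  apply mul_le_mul_of_nonneg_left _ (by positivity)
  apply inv_anti₀ (by positivity)
  exact denom_lb α θ ψ lam (r^α) hxα.le hlam hψ hα0 hαθ.le

lemma gray_denom_ne (α θ t lam ψ r : ℝ) (hα0 : 0 < α) (hθ1 : 0 < θ)
    (hr : 0 < r) (hlam : 0 ≤ lam) (hψ : |ψ| ≤ θ) (hαθ : α*θ < Real.pi) :
    (((r ^ α : ℝ) : ℂ) * Complex.exp (((α*ψ : ℝ) : ℂ) * Complex.I) + (lam:ℂ)) ≠ 0 := by
  have hc0 : 0 < Real.sqrt ((1 + Real.cos (α*θ))/2) := c0_pos α θ (mul_pos hα0 hθ1) hαθ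
  have hxα : 0 < r ^ α := Real.rpow_pos_of_pos hr α
  have hlb := denom_lb α θ ψ lam (r^α) hxα.le hlam hψ hα0 hαθ.le
  intro h
  rw [h] at hlb
  simp only [map_zero] at hlb
  nlinarith

lemma gray_continuousOn (α θ t lam ψ κ : ℝ) (hα0 : 0 < α) (hθ1 : 0 < θ)
    (hκ : 0 < κ) (hlam : 0 ≤ lam) (hψ : |ψ| ≤ θ) (hαθ : α*θ < Real.pi) :
    ContinuousOn (gray α t lam ψ) (Set.Ioi κ) := by
  unfold gray
  have h1 : Continuous (fun r : ℝ => Complex.exp ((r:ℂ) * Complex.exp ((ψ:ℂ) * Complex.I) * (t:ℂ))) :=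
    Complex.continuous_exp.comp ((Complex.continuous_ofReal.mul continuous_const).mul continuous_const)
  have h2 : ContinuousOn (fun r : ℝ => (((r ^ (α-1) : ℝ)):ℂ)) (Set.Ioi κ) :=
    Complex.continuous_ofReal.comp_continuousOn (rpow_cont (α-1) κ hκ)
  have h4 : ContinuousOn (fun r : ℝ =>
      ((((r ^ α : ℝ)):ℂ) * Complex.exp (((α*ψ : ℝ) : ℂ) * Complex.I) + (lam:ℂ))⁻¹) (Set.Ioi κ) := by
    apply ContinuousOn.inv₀
    · exact ((Complex.continuous_ofReal.comp_continuousOn (rpow_cont α κ hκ)).mul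
        continuousOn_const).add continuousOn_const
    · intro r hr
      exact gray_denom_ne α θ t lam ψ r hα0 hθ1 (lt_trans hκ hr) hlam hψ hαθ
  exact ((((h1.continuousOn.mul h2).mul continuousOn_const).mul h4).mul continuousOn_const)

lemma gray_integrableOn (α θ t lam ψ κ : ℝ) (hα0 : 0 < α) (hα1 : α < 1) (hθ1 : 0 < θ)
    (hκ : 0 < κ) (ht : 0 < t) (hlam : 0 ≤ lam) (hψ : |ψ| ≤ θ) (hαθ : α*θ < Real.pi)
    (hcψ : Real.cos ψ < 0) :
    IntegrableOn (gray α t lam ψ) (Set.Ioi κ) := by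
  set c0 := Real.sqrt ((1 + Real.cos (α*θ))/2) with hc0def
  have hc0 : 0 < c0 := c0_pos α θ (mul_pos hα0 hθ1) hαθ
  have hb : 0 < t * (-Real.cos ψ) := mul_pos ht (by linarith)
  apply Integrable.mono' (((exp_neg_integrableOn_Ioi κ hb).const_mul ((c0 * κ)⁻¹)))
  · exact (gray_continuousOn α θ t lam ψ κ hα0 hθ1 hκ hlam hψ hαθ).aestronglyMeasurable
      measurableSet_Ioi
  · filter_upwards [ae_restrict_mem measurableSet_Ioi] with r hr
    have hr0 : 0 < r := lt_trans hκ hr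
    have hxα : 0 < r ^ α := Real.rpow_pos_of_pos hr0 α
    have hx1 : 0 < r ^ (α-1) := Real.rpow_pos_of_pos hr0 (α-1)
    rw [Complex.norm_eq_abs]
    calc Complex.abs (gray α t lam ψ r)
        ≤ Real.exp (r * t * Real.cos ψ) * r ^ (α-1) * (c0 * (r^α + lam))⁻¹ :=
          gray_abs_le α θ t lam ψ r hα0 hθ1 hr0 hlam hψ hαθ
      _ ≤ Real.exp (r * t * Real.cos ψ) * r ^ (α-1) * (c0 * r^α)⁻¹ := by
          apply mul_le_mul_of_nonneg_left _ (by positivity)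
          apply inv_anti₀ (by positivity)
          apply mul_le_mul_of_nonneg_left _ hc0.le
          linarith
      _ = Real.exp (r * t * Real.cos ψ) * (c0⁻¹ * r⁻¹) := by
          have h9 : r ^ (α-1) * (r^α)⁻¹ = r⁻¹ := by
            rw [← Real.rpow_neg hr0.le, ← Real.rpow_add hr0,
              show α - 1 + -α = -1 by ring, Real.rpow_neg_one]
          rw [mul_inv, ← h9]
          ring
      _ ≤ Real.exp (r * t * Real.cos ψ) * (c0⁻¹ * κ⁻¹) := by
          apply mul_le_mul_of_nonneg_left _ (Real.exp_pos _).le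
          apply mul_le_mul_of_nonneg_left _ (by positivity)
          exact inv_anti₀ hκ (le_of_lt hr)
      _ = (c0 * κ)⁻¹ * Real.exp (-(t * (-Real.cos ψ)) * r) := by
          rw [mul_inv, show -(t * (-Real.cos ψ)) * r = r * t * Real.cos ψ by ring]
          ring

lemma ray_M2 (α θ t lam ψ κ : ℝ) (hα0 : 0 < α) (hα1 : α < 1) (hθ1 : 0 < θ)
    (hκ : 0 < κ) (ht : 0 < t) (hlam : 0 ≤ lam) (hψ : |ψ| ≤ θ) (hαθ : α*θ < Real.pi)
    (hcψ : Real.cos ψ = Real.cos θ) (hcθ : Real.cos θ < 0) :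
    lam * Complex.abs (∫ r in Set.Ioi κ, gray α t lam ψ r)
      ≤ (Real.sqrt ((1 + Real.cos (α*θ))/2))⁻¹ *
        (Real.Gamma α * (t * (-Real.cos θ)) ^ (-α)) := by
  set c0 := Real.sqrt ((1 + Real.cos (α*θ))/2) with hc0def
  have hc0 : 0 < c0 := c0_pos α θ (mul_pos hα0 hθ1) hαθ
  have hb : 0 < t * (-Real.cos θ) := mul_pos ht (by linarith)
  have hsmul : (lam:ℂ) • (∫ r in Set.Ioi κ, gray α t lam ψ r)
      = ∫ r in Set.Ioi κ, (lam:ℂ) • gray α t lam ψ r := (integral_smul _ _).symm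
  have habs : lam * Complex.abs (∫ r in Set.Ioi κ, gray α t lam ψ r)
      = Complex.abs (∫ r in Set.Ioi κ, (lam:ℂ) • gray α t lam ψ r) := by
    rw [← hsmul, smul_eq_mul, map_mul, Complex.abs_ofReal, _root_.abs_of_nonneg hlam]
  rw [habs]
  have hInt : IntegrableOn (fun r => c0⁻¹ * (Real.exp (-(t * (-Real.cos θ))*r) * r ^ (α-1)))
      (Set.Ioi κ) := (int_exp_rpow α (t * (-Real.cos θ)) κ hα1.le hb hκ).const_mul _
  calc Complex.abs (∫ r in Set.Ioi κ, (lam:ℂ) • gray α t lam ψ r)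
      ≤ ∫ r in Set.Ioi κ, c0⁻¹ * (Real.exp (-(t * (-Real.cos θ))*r) * r ^ (α-1)) := by
        rw [← Complex.norm_eq_abs]
        apply norm_integral_le_of_norm_le hInt
        filter_upwards [ae_restrict_mem measurableSet_Ioi] with r hr
        have hr0 : 0 < r := lt_trans hκ hr
        have hxα : 0 < r ^ α := Real.rpow_pos_of_pos hr0 α
        have hx1 : 0 < r ^ (α-1) := Real.rpow_pos_of_pos hr0 (α-1)
        rw [norm_smul, Complex.norm_eq_abs, Complex.norm_eq_abs, Complex.abs_ofReal,
          _root_.abs_of_nonneg hlam]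
        calc lam * Complex.abs (gray α t lam ψ r)
            ≤ lam * (Real.exp (r * t * Real.cos ψ) * r ^ (α-1) * (c0 * (r^α + lam))⁻¹) := by
              apply mul_le_mul_of_nonneg_left _ hlam
              exact gray_abs_le α θ t lam ψ r hα0 hθ1 hr0 hlam hψ hαθ
          _ ≤ c0⁻¹ * (Real.exp (-(t * (-Real.cos θ))*r) * r ^ (α-1)) := by
              rw [hcψ, show -(t * (-Real.cos θ))*r = r * t * Real.cos θ by ring]
              rw [mul_inv]
              have hfrac : lam * (r^α + lam)⁻¹ ≤ 1 := by
                rw [← div_eq_mul_inv, div_le_one (by positivity)]; linarith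
              have e1 : lam * (Real.exp (r * t * Real.cos θ) * r ^ (α-1) * (c0⁻¹ * (r^α + lam)⁻¹))
                  = (c0⁻¹ * (Real.exp (r * t * Real.cos θ) * r ^ (α-1))) * (lam * (r^α + lam)⁻¹) := by
                ring
              rw [e1]
              calc (c0⁻¹ * (Real.exp (r * t * Real.cos θ) * r ^ (α-1))) * (lam * (r^α + lam)⁻¹)
                  ≤ (c0⁻¹ * (Real.exp (r * t * Real.cos θ) * r ^ (α-1))) * 1 :=
                    mul_le_mul_of_nonneg_left hfrac (by positivity)
                _ = c0⁻¹ * (Real.exp (r * t * Real.cos θ) * r ^ (α-1)) := mul_one _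
    _ = c0⁻¹ * ∫ r in Set.Ioi κ, Real.exp (-(t * (-Real.cos θ))*r) * r ^ (α-1) :=
        integral_const_mul _ _
    _ ≤ c0⁻¹ * (Real.Gamma α * (t * (-Real.cos θ)) ^ (-α)) := by
        apply mul_le_mul_of_nonneg_left _ (by positivity)
        exact gamma_tail_bound α (t * (-Real.cos θ)) κ hα0 hb hκ

lemma ray_M1 (α θ t lam κ : ℝ) (hα0 : 0 < α) (hα1 : α < 1) (hθ1 : 0 < θ) (hθ2 : θ < Real.pi)
    (hκ : 0 < κ) (ht : 0 < t) (hlam : 0 ≤ lam) (hαθ : α*θ < Real.pi)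
    (hcθ : Real.cos θ < 0) :
    Complex.abs ((∫ r in Set.Ioi κ, gray α t lam θ r) - ∫ r in Set.Ioi κ, gray α t lam (-θ) r)
      ≤ 2 * (Real.sqrt ((1 + Real.cos (α*θ))/2))⁻¹ * (-Real.cos θ)⁻¹
        + 2 * ((Real.sqrt ((1 + Real.cos (α*θ))/2))^2)⁻¹ * (1/α) := by
  set c0 := Real.sqrt ((1 + Real.cos (α*θ))/2) with hc0def
  have hc0 : 0 < c0 := c0_pos α θ (mul_pos hα0 hθ1) hαθ
  have hb : 0 < t * (-Real.cos θ) := mul_pos ht (by linarith)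
  have hψθ : |θ| ≤ θ := by rw [_root_.abs_of_pos hθ1]
  have hψθ' : |(-θ)| ≤ θ := by rw [abs_neg, _root_.abs_of_pos hθ1]
  have hint1 : IntegrableOn (gray α t lam θ) (Set.Ioi κ) :=
    gray_integrableOn α θ t lam θ κ hα0 hα1 hθ1 hκ ht hlam hψθ hαθ hcθ
  have hint2 : IntegrableOn (gray α t lam (-θ)) (Set.Ioi κ) :=
    gray_integrableOn α θ t lam (-θ) κ hα0 hα1 hθ1 hκ ht hlam hψθ' hαθ
      (by rwa [Real.cos_neg])
  rw [← integral_sub hint1 hint2]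
  have hres := resolvent_integral α lam κ hα0 hκ hlam
  have hIg : IntegrableOn (fun r => 2 * t * c0⁻¹ * Real.exp (-(t * (-Real.cos θ)) * r)
      + 2 * (c0^2)⁻¹ * (lam * r ^ (α-1) / (r^α + lam)^2)) (Set.Ioi κ) :=
    ((exp_neg_integrableOn_Ioi κ hb).const_mul _).add (hres.1.const_mul _)
  calc Complex.abs (∫ r in Set.Ioi κ, (gray α t lam θ r - gray α t lam (-θ) r))
      ≤ ∫ r in Set.Ioi κ, (2 * t * c0⁻¹ * Real.exp (-(t * (-Real.cos θ)) * r)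
          + 2 * (c0^2)⁻¹ * (lam * r ^ (α-1) / (r^α + lam)^2)) := by
        rw [← Complex.norm_eq_abs]
        apply norm_integral_le_of_norm_le hIg
        filter_upwards [ae_restrict_mem measurableSet_Ioi] with r hr
        have hr0 : 0 < r := lt_trans hκ hr
        have hsub : gray α t lam θ r - gray α t lam (-θ) r
            = (2 * (gray α t lam θ r).im : ℝ) * Complex.I := by
          rw [gray_neg]
          rw [Complex.sub_conj]
        rw [Complex.norm_eq_abs, hsub, map_mul, Complex.abs_I, mul_one, Complex.abs_ofReal]
        rw [abs_mul, _root_.abs_of_nonneg (by norm_num : (0:ℝ) ≤ 2)]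
        have him := gray_im_le α θ t lam r hα0 hθ1 hθ2 hcθ.le hαθ ht hlam hr0
        calc 2 * |(gray α t lam θ r).im|
            ≤ 2 * (t * Real.exp (r * t * Real.cos θ) * c0⁻¹
              + lam * r ^ (α-1) / (c0^2 * (r^α + lam)^2)) := by linarith
          _ = 2 * t * c0⁻¹ * Real.exp (-(t * (-Real.cos θ)) * r)
              + 2 * (c0^2)⁻¹ * (lam * r ^ (α-1) / (r^α + lam)^2) := by
              rw [show -(t * (-Real.cos θ)) * r = r * t * Real.cos θ by ring]
              field_simp
    _ = 2 * t * c0⁻¹ * (∫ r in Set.Ioi κ, Real.exp (-(t * (-Real.cos θ)) * r))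
        + 2 * (c0^2)⁻¹ * (∫ r in Set.Ioi κ, lam * r ^ (α-1) / (r^α + lam)^2) := by
        rw [integral_add ((exp_neg_integrableOn_Ioi κ hb).const_mul _) (hres.1.const_mul _),
          integral_const_mul, integral_const_mul]
    _ ≤ 2 * t * c0⁻¹ * (t * (-Real.cos θ))⁻¹ + 2 * (c0^2)⁻¹ * (1/α) := by
        apply add_le_add
        · exact mul_le_mul_of_nonneg_left (exp_integral_bound _ κ hb hκ.le) (by positivity)
        · exact mul_le_mul_of_nonneg_left hres.2 (by positivity)
    _ = 2 * c0⁻¹ * (-Real.cos θ)⁻¹ + 2 * (c0^2)⁻¹ * (1/α) := by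
        have ht' : t ≠ 0 := ne_of_gt ht
        rw [mul_inv, show 2 * t * c0⁻¹ * (t⁻¹ * (-Real.cos θ)⁻¹)
          = 2 * c0⁻¹ * (-Real.cos θ)⁻¹ * (t * t⁻¹) by ring, mul_inv_cancel₀ ht', mul_one]

lemma arc_bound (α θ t lam κ T : ℝ) (hα0 : 0 < α) (hα1 : α < 1) (hθ1 : 0 < θ)
    (hθ2 : θ < Real.pi) (hκ : 0 < κ) (ht : 0 < t) (htT : t ≤ T) (hlam : 0 ≤ lam)
    (hαθ : α*θ < Real.pi) :
    Complex.abs (∫ ψ in (-θ)..θ,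
        (Complex.exp (((κ:ℂ) * Complex.exp ((ψ:ℂ) * Complex.I)) * (t:ℂ)) *
          ((κ:ℂ) * Complex.exp ((ψ:ℂ) * Complex.I)) ^ ((α:ℂ) - 1) *
          (((κ:ℂ) * Complex.exp ((ψ:ℂ) * Complex.I)) ^ (α:ℂ) + (lam:ℂ))⁻¹) *
        (Complex.I * (κ:ℂ) * Complex.exp ((ψ:ℂ) * Complex.I)))
      ≤ (Real.exp (κ * T) * κ ^ α * (Real.sqrt ((1 + Real.cos (α*θ))/2) * (κ^α + lam))⁻¹)
          * (2 * θ) := by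
  set c0 := Real.sqrt ((1 + Real.cos (α*θ))/2) with hc0def
  have hc0 : 0 < c0 := c0_pos α θ (mul_pos hα0 hθ1) hαθ
  have hxα : 0 < κ ^ α := Real.rpow_pos_of_pos hκ α
  rw [← Complex.norm_eq_abs]
  have key : ∀ ψ ∈ Set.uIoc (-θ) θ,
      ‖(Complex.exp (((κ:ℂ) * Complex.exp ((ψ:ℂ) * Complex.I)) * (t:ℂ)) *
          ((κ:ℂ) * Complex.exp ((ψ:ℂ) * Complex.I)) ^ ((α:ℂ) - 1) *
          (((κ:ℂ) * Complex.exp ((ψ:ℂ) * Complex.I)) ^ (α:ℂ) + (lam:ℂ))⁻¹) *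
        (Complex.I * (κ:ℂ) * Complex.exp ((ψ:ℂ) * Complex.I))‖
      ≤ Real.exp (κ * T) * κ ^ α * (c0 * (κ^α + lam))⁻¹ := by
    intro ψ hψmem
    rw [Set.uIoc_of_le (by linarith : -θ ≤ θ)] at hψmem
    have hψ1 : -Real.pi < ψ := by cases hψmem; linarith
    have hψ2 : ψ ≤ Real.pi := by cases hψmem; linarith
    have hψθ : |ψ| ≤ θ := by
      rw [abs_le]; exact ⟨hψmem.1.le, hψmem.2⟩
    have hgr : (Complex.exp (((κ:ℂ) * Complex.exp ((ψ:ℂ) * Complex.I)) * (t:ℂ)) *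
          ((κ:ℂ) * Complex.exp ((ψ:ℂ) * Complex.I)) ^ ((α:ℂ) - 1) *
          (((κ:ℂ) * Complex.exp ((ψ:ℂ) * Complex.I)) ^ (α:ℂ) + (lam:ℂ))⁻¹) *
          Complex.exp ((ψ:ℂ) * Complex.I) = gray α t lam ψ κ :=
      gray_eq α t lam ψ κ hκ hψ1 hψ2
    have habs2 : ‖(Complex.exp (((κ:ℂ) * Complex.exp ((ψ:ℂ) * Complex.I)) * (t:ℂ)) *
          ((κ:ℂ) * Complex.exp ((ψ:ℂ) * Complex.I)) ^ ((α:ℂ) - 1) *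
          (((κ:ℂ) * Complex.exp ((ψ:ℂ) * Complex.I)) ^ (α:ℂ) + (lam:ℂ))⁻¹) *
        (Complex.I * (κ:ℂ) * Complex.exp ((ψ:ℂ) * Complex.I))‖
        = Complex.abs (gray α t lam ψ κ) * κ := by
      have hprod2 : (Complex.exp (((κ:ℂ) * Complex.exp ((ψ:ℂ) * Complex.I)) * (t:ℂ)) *
          ((κ:ℂ) * Complex.exp ((ψ:ℂ) * Complex.I)) ^ ((α:ℂ) - 1) *
          (((κ:ℂ) * Complex.exp ((ψ:ℂ) * Complex.I)) ^ (α:ℂ) + (lam:ℂ))⁻¹) *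
        (Complex.I * (κ:ℂ) * Complex.exp ((ψ:ℂ) * Complex.I))
          = gray α t lam ψ κ * (Complex.I * (κ:ℂ)) := by
        rw [← hgr]; ring
      rw [Complex.norm_eq_abs, hprod2, map_mul, map_mul, Complex.abs_I,
        Complex.abs_ofReal, _root_.abs_of_pos hκ]
      ring
    rw [habs2]
    calc Complex.abs (gray α t lam ψ κ) * κ
        ≤ (Real.exp (κ * t * Real.cos ψ) * κ ^ (α-1) * (c0 * (κ^α + lam))⁻¹) * κ := by
          apply mul_le_mul_of_nonneg_right _ hκ.le
          exact gray_abs_le α θ t lam ψ κ hα0 hθ1 hκ hlam hψθ hαθ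
      _ ≤ (Real.exp (κ * T) * κ ^ (α-1) * (c0 * (κ^α + lam))⁻¹) * κ := by
          have : κ * t * Real.cos ψ ≤ κ * T := by
            nlinarith [Real.cos_le_one ψ, Real.neg_one_le_cos ψ, mul_pos hκ ht]
          have h1 : Real.exp (κ * t * Real.cos ψ) ≤ Real.exp (κ * T) := Real.exp_le_exp.2 this
          apply mul_le_mul_of_nonneg_right _ hκ.le
          apply mul_le_mul_of_nonneg_right _ (by positivity)
          apply mul_le_mul_of_nonneg_right h1 (by positivity)
      _ = Real.exp (κ * T) * κ ^ α * (c0 * (κ^α + lam))⁻¹ := by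
          have h9 : κ ^ (α-1) * κ ^ (1:ℝ) = κ ^ α := by
            rw [← Real.rpow_add hκ]; norm_num
          rw [← h9, Real.rpow_one]
          ring
  calc ‖∫ ψ in (-θ)..θ, (Complex.exp (((κ:ℂ) * Complex.exp ((ψ:ℂ) * Complex.I)) * (t:ℂ)) *
          ((κ:ℂ) * Complex.exp ((ψ:ℂ) * Complex.I)) ^ ((α:ℂ) - 1) *
          (((κ:ℂ) * Complex.exp ((ψ:ℂ) * Complex.I)) ^ (α:ℂ) + (lam:ℂ))⁻¹) *
        (Complex.I * (κ:ℂ) * Complex.exp ((ψ:ℂ) * Complex.I))‖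
      ≤ (Real.exp (κ * T) * κ ^ α * (c0 * (κ^α + lam))⁻¹) * |θ - (-θ)| :=
        intervalIntegral.norm_integral_le_of_norm_le_const key
    _ = (Real.exp (κ * T) * κ ^ α * (c0 * (κ^α + lam))⁻¹) * (2 * θ) := by
        rw [_root_.abs_of_pos (by linarith : (0:ℝ) < θ - (-θ))]
        ring

lemma contour_eq (α θ κ t lam : ℝ) (hθ1 : 0 < θ) (hθ2 : θ < Real.pi) (hκ : 0 < κ) :
    contourIntegral θ κ (fun z => Complex.exp (z * (t:ℂ)) * z ^ ((α:ℂ) - 1) *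
        (z ^ (α:ℂ) + (lam:ℂ))⁻¹)
      = (∫ r in Set.Ioi κ, gray α t lam θ r) - (∫ r in Set.Ioi κ, gray α t lam (-θ) r) +
        ∫ ψ in (-θ)..θ,
          (Complex.exp (((κ:ℂ) * Complex.exp ((ψ:ℂ) * Complex.I)) * (t:ℂ)) *
            ((κ:ℂ) * Complex.exp ((ψ:ℂ) * Complex.I)) ^ ((α:ℂ) - 1) *
            (((κ:ℂ) * Complex.exp ((ψ:ℂ) * Complex.I)) ^ (α:ℂ) + (lam:ℂ))⁻¹) *
          (Complex.I * (κ:ℂ) * Complex.exp ((ψ:ℂ) * Complex.I)) := by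
  unfold contourIntegral
  congr 1
  congr 1
  · apply setIntegral_congr_fun measurableSet_Ioi
    intro r hr
    exact gray_eq α t lam θ r (lt_trans hκ hr) (by linarith) (by linarith)
  · apply setIntegral_congr_fun measurableSet_Ioi
    intro r hr
    have hneg : -(θ:ℂ) * Complex.I = (((-θ : ℝ)):ℂ) * Complex.I := by push_cast; ring
    rw [hneg]
    exact gray_eq α t lam (-θ) r (lt_trans hκ hr) (by linarith) (by linarith)

lemma abs_two_pi_I_inv :
    Complex.abs ((2 * (Real.pi : ℂ) * Complex.I)⁻¹) = (2 * Real.pi)⁻¹ := by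
  rw [map_inv₀, map_mul, map_mul, Complex.abs_two, Complex.abs_ofReal, Complex.abs_I,
    _root_.abs_of_pos Real.pi_pos, mul_one]

lemma key1 (α θ κ T t lam : ℝ) (hα0 : 0 < α) (hα1 : α < 1)
    (hθ1 : Real.pi/2 < θ) (hθ2 : θ < Real.pi) (hαθ : α*θ < Real.pi) (hκ : 0 < κ)
    (ht : 0 < t) (htT : t ≤ T) (hlam : 0 ≤ lam) :
    Complex.abs ((2 * (Real.pi : ℂ) * Complex.I)⁻¹ *
        contourIntegral θ κ (fun z => Complex.exp (z * (t:ℂ)) * z ^ ((α:ℂ) - 1) *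
          (z ^ (α:ℂ) + (lam:ℂ))⁻¹))
      ≤ (2 * Real.pi)⁻¹ *
        ((2 * (Real.sqrt ((1 + Real.cos (α*θ))/2))⁻¹ * (-Real.cos θ)⁻¹
          + 2 * ((Real.sqrt ((1 + Real.cos (α*θ))/2))^2)⁻¹ * (1/α))
         + Real.exp (κ * T) * κ ^ α * (Real.sqrt ((1 + Real.cos (α*θ))/2) * κ^α)⁻¹ * (2*θ)) := by
  have hθ0 : 0 < θ := lt_trans (by positivity) hθ1
  have hcθ : Real.cos θ < 0 := Real.cos_neg_of_pi_div_two_lt_of_lt hθ1 (by linarith)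
  set c0 := Real.sqrt ((1 + Real.cos (α*θ))/2) with hc0def
  have hc0 : 0 < c0 := c0_pos α θ (mul_pos hα0 hθ0) hαθ
  have hxα : 0 < κ ^ α := Real.rpow_pos_of_pos hκ α
  rw [map_mul, abs_two_pi_I_inv, contour_eq α θ κ t lam hθ0 hθ2 hκ]
  apply mul_le_mul_of_nonneg_left _ (by positivity)
  apply le_trans (Complex.abs.add_le _ _)
  apply add_le_add
  · exact ray_M1 α θ t lam κ hα0 hα1 hθ0 hθ2 hκ ht hlam hαθ hcθ
  · apply le_trans (arc_bound α θ t lam κ T hα0 hα1 hθ0 hθ2 hκ ht htT hlam hαθ)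
    apply mul_le_mul_of_nonneg_right _ (by positivity)
    apply mul_le_mul_of_nonneg_left _ (by positivity)
    apply inv_anti₀ (by positivity)
    apply mul_le_mul_of_nonneg_left _ hc0.le
    linarith

lemma key2 (α θ κ T t lam : ℝ) (hα0 : 0 < α) (hα1 : α < 1)
    (hθ1 : Real.pi/2 < θ) (hθ2 : θ < Real.pi) (hαθ : α*θ < Real.pi) (hκ : 0 < κ)
    (ht : 0 < t) (htT : t ≤ T) (hlam : 0 ≤ lam) :
    lam * Complex.abs ((2 * (Real.pi : ℂ) * Complex.I)⁻¹ *
        contourIntegral θ κ (fun z => Complex.exp (z * (t:ℂ)) * z ^ ((α:ℂ) - 1) *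
          (z ^ (α:ℂ) + (lam:ℂ))⁻¹))
      ≤ ((2 * Real.pi)⁻¹ *
          (2 * ((Real.sqrt ((1 + Real.cos (α*θ))/2))⁻¹ * (Real.Gamma α * (-Real.cos θ) ^ (-α)))
           + Real.exp (κ * T) * κ ^ α * (Real.sqrt ((1 + Real.cos (α*θ))/2))⁻¹ * (2*θ) * T^α))
        * t ^ (-α) := by
  have hθ0 : 0 < θ := lt_trans (by positivity) hθ1
  have hcθ : Real.cos θ < 0 := Real.cos_neg_of_pi_div_two_lt_of_lt hθ1 (by linarith)
  set c0 := Real.sqrt ((1 + Real.cos (α*θ))/2) with hc0def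
  have hc0 : 0 < c0 := c0_pos α θ (mul_pos hα0 hθ0) hαθ
  have hxα : 0 < κ ^ α := Real.rpow_pos_of_pos hκ α
  have hψθ : |θ| ≤ θ := by rw [_root_.abs_of_pos hθ0]
  have hψθ' : |(-θ)| ≤ θ := by rw [abs_neg, _root_.abs_of_pos hθ0]
  have htα : 0 < t ^ (-α) := Real.rpow_pos_of_pos ht _
  rw [map_mul, abs_two_pi_I_inv, contour_eq α θ κ t lam hθ0 hθ2 hκ]
  have hR1 := ray_M2 α θ t lam θ κ hα0 hα1 hθ0 hκ ht hlam hψθ hαθ rfl hcθ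
  have hR2 := ray_M2 α θ t lam (-θ) κ hα0 hα1 hθ0 hκ ht hlam hψθ' hαθ (Real.cos_neg θ) hcθ
  have hArc := arc_bound α θ t lam κ T hα0 hα1 hθ0 hθ2 hκ ht htT hlam hαθ
  set S1 := ∫ r in Set.Ioi κ, gray α t lam θ r with hS1
  set S2 := ∫ r in Set.Ioi κ, gray α t lam (-θ) r with hS2
  set Arc := ∫ ψ in (-θ)..θ,
          (Complex.exp (((κ:ℂ) * Complex.exp ((ψ:ℂ) * Complex.I)) * (t:ℂ)) *
            ((κ:ℂ) * Complex.exp ((ψ:ℂ) * Complex.I)) ^ ((α:ℂ) - 1) *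
            (((κ:ℂ) * Complex.exp ((ψ:ℂ) * Complex.I)) ^ (α:ℂ) + (lam:ℂ))⁻¹) *
          (Complex.I * (κ:ℂ) * Complex.exp ((ψ:ℂ) * Complex.I)) with hArcdef
  have htri : Complex.abs (S1 - S2 + Arc)
      ≤ Complex.abs S1 + Complex.abs S2 + Complex.abs Arc := by
    apply le_trans (Complex.abs.add_le _ _)
    apply add_le_add_left
    simpa [sub_eq_add_neg] using Complex.abs.add_le S1 (-S2)
  -- split (t * (-cos θ))^(-α)
  have hsplit : (t * (-Real.cos θ)) ^ (-α) = t ^ (-α) * (-Real.cos θ) ^ (-α) :=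
    Real.mul_rpow ht.le (by linarith)
  -- lam * abs Arc bound
  have hlamArc : lam * Complex.abs Arc ≤ Real.exp (κ * T) * κ ^ α * c0⁻¹ * (2*θ) := by
    calc lam * Complex.abs Arc
        ≤ lam * (Real.exp (κ * T) * κ ^ α * (c0 * (κ^α + lam))⁻¹ * (2*θ)) :=
          mul_le_mul_of_nonneg_left hArc hlam
      _ = Real.exp (κ * T) * κ ^ α * c0⁻¹ * (2*θ) * (lam * (κ^α + lam)⁻¹) := by
          rw [mul_inv]; ring
      _ ≤ Real.exp (κ * T) * κ ^ α * c0⁻¹ * (2*θ) * 1 := by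
          apply mul_le_mul_of_nonneg_left _ (by positivity)
          rw [← div_eq_mul_inv, div_le_one (by positivity)]; linarith
      _ = Real.exp (κ * T) * κ ^ α * c0⁻¹ * (2*θ) := mul_one _
  have hTt : 1 ≤ T^α * t ^ (-α) := by
    have h1 : t^α ≤ T^α := Real.rpow_le_rpow ht.le htT hα0.le
    have h2 : t ^ (-α) = (t^α)⁻¹ := Real.rpow_neg ht.le α
    rw [h2]
    rw [← div_eq_mul_inv, le_div_iff₀ (Real.rpow_pos_of_pos ht α)]
    linarith
  calc lam * ((2 * Real.pi)⁻¹ * Complex.abs (S1 - S2 + Arc))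
      ≤ lam * ((2 * Real.pi)⁻¹ * (Complex.abs S1 + Complex.abs S2 + Complex.abs Arc)) := by
        apply mul_le_mul_of_nonneg_left _ hlam
        exact mul_le_mul_of_nonneg_left htri (by positivity)
    _ = (2 * Real.pi)⁻¹ * ((lam * Complex.abs S1 + lam * Complex.abs S2) + lam * Complex.abs Arc) := by
        ring
    _ ≤ (2 * Real.pi)⁻¹ * ((c0⁻¹ * (Real.Gamma α * (t * (-Real.cos θ)) ^ (-α))
          + c0⁻¹ * (Real.Gamma α * (t * (-Real.cos θ)) ^ (-α)))
          + Real.exp (κ * T) * κ ^ α * c0⁻¹ * (2*θ)) := by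
        apply mul_le_mul_of_nonneg_left _ (by positivity)
        exact add_le_add (add_le_add hR1 hR2) hlamArc
    _ = (2 * Real.pi)⁻¹ * (2 * (c0⁻¹ * (Real.Gamma α * (-Real.cos θ) ^ (-α)))) * t ^ (-α)
          + (2 * Real.pi)⁻¹ * (Real.exp (κ * T) * κ ^ α * c0⁻¹ * (2*θ)) * 1 := by
        rw [hsplit]; ring
    _ ≤ (2 * Real.pi)⁻¹ * (2 * (c0⁻¹ * (Real.Gamma α * (-Real.cos θ) ^ (-α)))) * t ^ (-α)
          + (2 * Real.pi)⁻¹ * (Real.exp (κ * T) * κ ^ α * c0⁻¹ * (2*θ)) * (T^α * t ^ (-α)) := by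
        apply add_le_add_right
        apply mul_le_mul_of_nonneg_left hTt (by positivity)
    _ = ((2 * Real.pi)⁻¹ *
          (2 * (c0⁻¹ * (Real.Gamma α * (-Real.cos θ) ^ (-α)))
           + Real.exp (κ * T) * κ ^ α * c0⁻¹ * (2*θ) * T^α)) * t ^ (-α) := by
        ring

end SSOS


/-- Scalar (spectral) form of the solution-operator smoothing estimate
`‖A^σ E(t)‖ ≤ C t^{-σα}` underlying Theorem 1: for `α ∈ (0,1)`, `θ ∈ (π/2,π)` with
`αθ < π`, `κ > 0`, `T > 0`, `σ ∈ [0,1]`, there is `C > 0` with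
`λ^σ |(1/(2πi)) ∫_{Γ_{θ,κ}} e^{zt} z^{α-1} (z^α+λ)⁻¹ dz| ≤ C t^{-σα}`
for all `t ∈ (0,T]` and all `λ ≥ 0`. -/
theorem scalar_solution_operator_smoothing
    (α θ κ T σ : ℝ) (hα : α ∈ Set.Ioo (0:ℝ) 1)
    (hθ : θ ∈ Set.Ioo (Real.pi / 2) Real.pi) (hαθ : α * θ < Real.pi)
    (hκ : 0 < κ) (hT : 0 < T) (hσ : σ ∈ Set.Icc (0:ℝ) 1) :
    ∃ C : ℝ, 0 < C ∧
      ∀ t ∈ Set.Ioc (0:ℝ) T, ∀ lam : ℝ, 0 ≤ lam →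
        lam ^ σ * ‖
          ((2 * (Real.pi : ℂ) * Complex.I)⁻¹ *
            contourIntegral θ κ (fun z =>
              Complex.exp (z * (t : ℂ)) * z ^ ((α : ℂ) - 1) *
                (z ^ (α : ℂ) + (lam : ℂ))⁻¹))‖
          ≤ C * t ^ (-σ * α) := by
  obtain ⟨hα0, hα1⟩ := hα
  obtain ⟨hθ1, hθ2⟩ := hθ
  obtain ⟨hσ0, hσ1⟩ := hσ
  have hθ0 : 0 < θ := lt_trans (by positivity) hθ1
  have hcθ : Real.cos θ < 0 := Real.cos_neg_of_pi_div_two_lt_of_lt hθ1 (by linarith)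
  set c0 := Real.sqrt ((1 + Real.cos (α*θ))/2) with hc0def
  have hc0 : 0 < c0 := SSOS.c0_pos α θ (mul_pos hα0 hθ0) hαθ
  have hxα : 0 < κ ^ α := Real.rpow_pos_of_pos hκ α
  set C1 := (2 * Real.pi)⁻¹ *
        ((2 * c0⁻¹ * (-Real.cos θ)⁻¹ + 2 * (c0^2)⁻¹ * (1/α))
         + Real.exp (κ * T) * κ ^ α * (c0 * κ^α)⁻¹ * (2*θ)) with hC1def
  set C2 := (2 * Real.pi)⁻¹ *
          (2 * (c0⁻¹ * (Real.Gamma α * (-Real.cos θ) ^ (-α)))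
           + Real.exp (κ * T) * κ ^ α * c0⁻¹ * (2*θ) * T^α) with hC2def
  have hC1 : 0 < C1 := by
    have hG1 : 0 < -Real.cos θ := by linarith
    positivity
  have hC2 : 0 < C2 := by
    have hG1 : 0 < -Real.cos θ := by linarith
    have hG : 0 < Real.Gamma α := Real.Gamma_pos_of_pos hα0
    positivity
  refine ⟨C2 ^ σ * C1 ^ (1-σ), by positivity, ?_⟩
  rintro t ⟨ht, htT⟩ lam hlam
  set A := ‖
          ((2 * (Real.pi : ℂ) * Complex.I)⁻¹ *
            contourIntegral θ κ (fun z =>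
              Complex.exp (z * (t : ℂ)) * z ^ ((α : ℂ) - 1) *
                (z ^ (α : ℂ) + (lam : ℂ))⁻¹))‖ with hAdef
  have hA0 : 0 ≤ A := norm_nonneg _
  have hA1 : A ≤ C1 := SSOS.key1 α θ κ T t lam hα0 hα1 hθ1 hθ2 hαθ hκ ht htT hlam
  have hA2 : lam * A ≤ C2 * t ^ (-α) :=
    SSOS.key2 α θ κ T t lam hα0 hα1 hθ1 hθ2 hαθ hκ ht htT hlam
  have htpow : 0 < t ^ (-σ*α) := Real.rpow_pos_of_pos ht _
  rcases eq_or_lt_of_le hσ0 with hσz | hσpos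
  · -- σ = 0
    rw [← hσz]
    simp only [Real.rpow_zero, one_mul, neg_zero, zero_mul, Real.rpow_zero, mul_one,
      sub_zero, Real.rpow_one]
    exact hA1
  · rcases eq_or_lt_of_le hlam with hlz | hlpos
    · -- lam = 0
      rw [← hlz, Real.zero_rpow (ne_of_gt hσpos), zero_mul]
      positivity
    · rcases eq_or_lt_of_le hA0 with hAz | hApos
      · rw [← hAz, mul_zero]
        positivity
      · have h2' : (lam * A) ^ σ ≤ (C2 * t ^ (-α)) ^ σ :=
          Real.rpow_le_rpow (by positivity) hA2 hσ0
        have h1' : A ^ (1-σ) ≤ C1 ^ (1-σ) :=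
          Real.rpow_le_rpow hA0 hA1 (by linarith)
        have hsplit : lam ^ σ * A = (lam * A) ^ σ * A ^ (1-σ) := by
          rw [Real.mul_rpow hlam hA0, mul_assoc, ← Real.rpow_add hApos]
          norm_num
        rw [hsplit]
        calc (lam * A) ^ σ * A ^ (1-σ)
            ≤ (C2 * t ^ (-α)) ^ σ * C1 ^ (1-σ) := by
              apply mul_le_mul h2' h1' (by positivity) (by positivity)
          _ = C2 ^ σ * C1 ^ (1-σ) * t ^ (-σ*α) := by
              rw [Real.mul_rpow hC2.le (Real.rpow_pos_of_pos ht (-α)).le,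
                ← Real.rpow_mul ht.le, show -α*σ = -σ*α from by ring]
              ring
end
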